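/- For every Hausdorff topological space X, the cardinality of X is at most 2^(χ(X)·L(X)), where χ(X) is the character of X and L(X) is the Lindelöf degree of X. -/

import Mathlib

open Cardinal

/-- `B` is a neighborhood basis at `x` consisting of open sets. -/
def IsNbhdBasisAt {X : Type u} [TopologicalSpace X] (x : X) (B : Set (Set X)) : Prop :=
  (∀ b ∈ B, x ∈ b ∧ IsOpen b) ∧ ∀ U : Set X, IsOpen U → x ∈ U → ∃ b ∈ B, b ⊆ U

/-- The character `χ(X)`: the least infinite cardinal `κ` such that every point
has a neighborhood basis of cardinality at most `κ`. -/
noncomputable def character (X : Type u) [TopologicalSpace X] : Cardinal.{u} :=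
  sInf {κ | Cardinal.aleph0 ≤ κ ∧ ∀ x : X, ∃ B : Set (Set X), IsNbhdBasisAt x B ∧ #B ≤ κ}

/-- The Lindelöf degree `L(X)`: the least infinite cardinal `κ` such that every
open cover has a subcover of cardinality at most `κ`. -/
noncomputable def lindelofDegree (X : Type u) [TopologicalSpace X] : Cardinal.{u} :=
  sInf {κ | Cardinal.aleph0 ≤ κ ∧ ∀ C : Set (Set X), (∀ U ∈ C, IsOpen U) → ⋃₀ C = Set.univ →
    ∃ D ⊆ C, #D ≤ κ ∧ ⋃₀ D = Set.univ}

section ArhAux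

open Set Ordinal

universe v

variable {X : Type v} [TopologicalSpace X] [T2Space X] {κ : Cardinal.{v}}
variable {B : X → Set (Set X)}

lemma arh_mem_closure_inter (hB : ∀ x, IsNbhdBasisAt x (B x)) {T : Set X} {y : X}
    (hy : y ∈ closure T) {b : Set X} (hb : b ∈ B y) : y ∈ closure (T ∩ b) := by
  rw [mem_closure_iff] at hy ⊢
  intro U hU hyU
  obtain ⟨hyb, hbo⟩ := (hB y).1 b hb
  obtain ⟨c, hc, hcsub⟩ := (hB y).2 (U ∩ b) (hU.inter hbo) ⟨hyU, hyb⟩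
  obtain ⟨hyc, hco⟩ := (hB y).1 c hc
  obtain ⟨t, htc, htT⟩ := hy c hco hyc
  exact ⟨t, (hcsub htc).1, htT, (hcsub htc).2⟩

lemma arh_closure_small (hB : ∀ x, IsNbhdBasisAt x (B x)) (hBκ : ∀ x, #(B x) ≤ κ)
    (hκ : ℵ₀ ≤ κ) {T : Set X} (hT : #T ≤ κ) : #(closure T) ≤ 2 ^ κ := by
  have hfmem : ∀ y : closure T,
      ((fun b => T ∩ b) '' B y.1) ⊆ 𝒫 T ∧ #((fun b => T ∩ b) '' B y.1) ≤ κ := by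
    intro y
    refine ⟨?_, mk_image_le.trans (hBκ y.1)⟩
    rintro s ⟨b, _, rfl⟩
    exact inter_subset_left
  have hinj : Function.Injective
      (fun y : closure T => (⟨_, hfmem y⟩ : {S : Set (Set X) // S ⊆ 𝒫 T ∧ #S ≤ κ})) := by
    intro y z hyz
    have h : (fun b => T ∩ b) '' B y.1 = (fun b => T ∩ b) '' B z.1 :=
      congrArg Subtype.val hyz
    apply Subtype.ext
    by_contra hne
    obtain ⟨U, V, hU, hV, hyU, hzV, hUV⟩ := t2_separation hne
    obtain ⟨b, hb, hbU⟩ := (hB y.1).2 U hU hyU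
    have hmem : T ∩ b ∈ (fun b => T ∩ b) '' B z.1 := h ▸ ⟨b, hb, rfl⟩
    obtain ⟨c, hc, hceq⟩ := hmem
    have hz' : z.1 ∈ closure (T ∩ b) := hceq ▸ arh_mem_closure_inter hB z.2 hc
    obtain ⟨t, htV, _, htb⟩ := mem_closure_iff.mp hz' V hV hzV
    exact (disjoint_left.mp hUV (hbU htb)) htV
  calc #(closure T) ≤ #{S : Set (Set X) // S ⊆ 𝒫 T ∧ #S ≤ κ} := mk_le_of_injective hinj
    _ ≤ max #(𝒫 T : Set (Set X)) ℵ₀ ^ κ := mk_bounded_subset_le _ κ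
    _ ≤ (2 ^ κ) ^ κ := by
        refine power_le_power_right (max_le ?_ (hκ.trans (cantor κ).le))
        rw [mk_powerset]
        exact (power_le_power_left two_ne_zero hT).trans (le_of_le_of_eq le_rfl rfl)
    _ = 2 ^ κ := by rw [← power_mul, mul_eq_self hκ]

theorem arh_aux (hκ : ℵ₀ ≤ κ)
    (hchar : ∀ x : X, ∃ B : Set (Set X), IsNbhdBasisAt x B ∧ #B ≤ κ)
    (hlin : ∀ C : Set (Set X), (∀ U ∈ C, IsOpen U) → ⋃₀ C = Set.univ →
      ∃ D ⊆ C, #D ≤ κ ∧ ⋃₀ D = Set.univ) : #X ≤ 2 ^ κ := by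
  rcases isEmpty_or_nonempty X with hX | hX
  · rw [mk_eq_zero X]; exact Cardinal.zero_le _
  choose B hB hBκ using hchar
  have h2κ : ℵ₀ ≤ (2 : Cardinal) ^ κ := hκ.trans (cantor κ).le
  have hκ2κ : κ ≤ 2 ^ κ := (cantor κ).le
  have hmul : (2 : Cardinal) ^ κ * 2 ^ κ = 2 ^ κ := by
    rw [← power_add, add_eq_self hκ]
  have hexp : ((2 : Cardinal) ^ κ) ^ κ = 2 ^ κ := by rw [← power_mul, mul_eq_self hκ]
  -- a choice of a point outside any non-covering family
  have hpick0 : ∀ 𝒰 : Set (Set X), ∃ p : X, ⋃₀ 𝒰 ≠ Set.univ → p ∉ ⋃₀ 𝒰 := by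
    intro 𝒰
    by_cases h : ⋃₀ 𝒰 = Set.univ
    · exact ⟨hX.some, fun h' => absurd h h'⟩
    · obtain ⟨p, hp⟩ := (ne_univ_iff_exists_notMem _).mp h
      exact ⟨p, fun _ => hp⟩
  choose pick hpick using hpick0
  set UB : Set X → Set (Set X) := fun A => ⋃ x ∈ A, B x with hUBdef
  set g : Set X → Set X := fun A =>
    closure A ∪ pick '' {𝒰 | 𝒰 ⊆ UB A ∧ #𝒰 ≤ κ ∧ ⋃₀ 𝒰 ≠ Set.univ} with hgdef
  have hgsub : ∀ A : Set X, closure A ⊆ g A := fun A => subset_union_left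
  have hgpick : ∀ (A : Set X) (𝒰 : Set (Set X)), 𝒰 ⊆ UB A → #𝒰 ≤ κ →
      ⋃₀ 𝒰 ≠ Set.univ → pick 𝒰 ∈ g A :=
    fun A 𝒰 h1 h2 h3 => Or.inr ⟨𝒰, ⟨h1, h2, h3⟩, rfl⟩
  have hgmono : ∀ {A A' : Set X}, A ⊆ A' → g A ⊆ g A' := by
    intro A A' hAA'
    apply union_subset_union (closure_mono hAA')
    apply image_mono
    rintro 𝒰 ⟨h1, h2, h3⟩
    exact ⟨h1.trans (biUnion_subset_biUnion_left hAA'), h2, h3⟩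
  have hUBcard : ∀ {A : Set X}, #A ≤ 2 ^ κ → #(UB A) ≤ 2 ^ κ := by
    intro A hA
    have he : UB A = ⋃ x : A, B x.1 := biUnion_eq_iUnion _ _
    rw [he]
    calc #(⋃ x : A, B x.1) ≤ sum (fun x : A => #(B x.1)) := mk_iUnion_le_sum_mk
      _ ≤ sum (fun _ : A => κ) := sum_le_sum _ _ (fun x => hBκ x.1)
      _ = #A * κ := sum_const' _ _
      _ ≤ 2 ^ κ * 2 ^ κ := mul_le_mul' hA hκ2κ
      _ = 2 ^ κ := hmul
  have hfam : ∀ {A : Set X}, #A ≤ 2 ^ κ →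
      #{𝒰 : Set (Set X) // 𝒰 ⊆ UB A ∧ #𝒰 ≤ κ} ≤ 2 ^ κ := by
    intro A hA
    calc #{𝒰 : Set (Set X) // 𝒰 ⊆ UB A ∧ #𝒰 ≤ κ}
        ≤ max #(UB A) ℵ₀ ^ κ := mk_bounded_subset_le _ κ
      _ ≤ (2 ^ κ) ^ κ := power_le_power_right (max_le (hUBcard hA) h2κ)
      _ = 2 ^ κ := hexp
  have hclosure : ∀ {A : Set X}, #A ≤ 2 ^ κ → #(closure A) ≤ 2 ^ κ := by
    intro A hA
    have hdec : closure A ⊆ ⋃ T : {T : Set X // T ⊆ A ∧ #T ≤ κ}, closure T.1 := by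
      intro y hy
      have hne : ∀ b ∈ B y, ∃ z, z ∈ b ∧ z ∈ A := by
        intro b hb
        obtain ⟨z, hz⟩ := mem_closure_iff.mp hy b ((hB y).1 b hb).2 ((hB y).1 b hb).1
        exact ⟨z, hz.1, hz.2⟩
      choose! s hs1 hs2 using hne
      refine mem_iUnion.mpr ⟨⟨s '' B y, ?_, mk_image_le.trans (hBκ y)⟩, ?_⟩
      · rintro a ⟨b, hb, rfl⟩; exact hs2 b hb
      · rw [mem_closure_iff]
        intro U hU hyU
        obtain ⟨b, hb, hbU⟩ := (hB y).2 U hU hyU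
        exact ⟨s b, hbU (hs1 b hb), ⟨b, hb, rfl⟩⟩
    calc #(closure A) ≤ #(⋃ T : {T : Set X // T ⊆ A ∧ #T ≤ κ}, closure T.1) :=
          mk_le_mk_of_subset hdec
      _ ≤ sum (fun T : {T : Set X // T ⊆ A ∧ #T ≤ κ} => #(closure T.1)) := mk_iUnion_le_sum_mk
      _ ≤ sum (fun _ : {T : Set X // T ⊆ A ∧ #T ≤ κ} => 2 ^ κ) :=
          sum_le_sum _ _ (fun T => arh_closure_small hB hBκ hκ T.2.2)
      _ = #{T : Set X // T ⊆ A ∧ #T ≤ κ} * 2 ^ κ := sum_const' _ _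
      _ ≤ 2 ^ κ * 2 ^ κ := by
          refine mul_le_mul' ?_ le_rfl
          calc #{T : Set X // T ⊆ A ∧ #T ≤ κ} ≤ max #A ℵ₀ ^ κ := mk_bounded_subset_le _ κ
            _ ≤ (2 ^ κ) ^ κ := power_le_power_right (max_le hA h2κ)
            _ = 2 ^ κ := hexp
      _ = 2 ^ κ := hmul
  have hgcard : ∀ {A : Set X}, #A ≤ 2 ^ κ → #(g A) ≤ 2 ^ κ := by
    intro A hA
    calc #(g A) ≤ #(closure A) +
          #(pick '' {𝒰 | 𝒰 ⊆ UB A ∧ #𝒰 ≤ κ ∧ ⋃₀ 𝒰 ≠ Set.univ}) := mk_union_le _ _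
      _ ≤ 2 ^ κ + 2 ^ κ := by
          refine add_le_add (hclosure hA) (mk_image_le.trans ?_)
          refine (mk_le_mk_of_subset ?_).trans (hfam hA)
          rintro 𝒰 ⟨h1, h2, _⟩
          exact ⟨h1, h2⟩
      _ = 2 ^ κ := add_eq_self h2κ
  -- the well-ordered index type of order type `(κ⁺).ord`
  have hreg : (Order.succ κ).IsRegular := isRegular_succ hκ
  have holim : Order.IsSuccLimit ((Order.succ κ).ord) := isSuccLimit_ord (hκ.trans (Order.lt_succ κ).le)
  haveI : NoMaxOrder ((Order.succ κ).ord).ToType :=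
    toType_noMax_of_succ_lt (fun a ha => holim.succ_lt ha)
  set W := ((Order.succ κ).ord).ToType with hWdef
  haveI hWO : IsWellOrder W ((· < ·) : W → W → Prop) :=
    isWellOrder_lt
  haveI hNM : NoMaxOrder W := inferInstanceAs (NoMaxOrder ((Order.succ κ).ord).ToType)
  have wf : WellFounded ((· < ·) : W → W → Prop) := IsWellFounded.wf
  set F : W → Set X := wf.fix (fun w IH => g (⋃ v : {v : W // v < w}, IH v.1 v.2)) with hFdef
  have hFeq : ∀ w : W, F w = g (⋃ v : {v : W // v < w}, F v.1) := fun w => wf.fix_eq _ w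
  have hFmono : ∀ {w w' : W}, w ≤ w' → F w ⊆ F w' := by
    intro w w' hww'
    rw [hFeq w, hFeq w']
    exact hgmono (iUnion_mono' (fun v => ⟨⟨v.1, lt_of_lt_of_le v.2 hww'⟩, subset_rfl⟩))
  have hIio : ∀ w : W, #{v : W // v < w} ≤ κ := by
    intro w
    rw [← Ordinal.card_typein (r := ((· < ·) : W → W → Prop)) w]
    have h1 := Ordinal.typein_lt_type ((· < ·) : W → W → Prop) w
    rw [show Ordinal.type ((· < ·) : W → W → Prop) = (Order.succ κ).ord from
      Ordinal.type_toType _] at h1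
    exact Order.lt_succ_iff.mp (Cardinal.lt_ord.mp h1)
  have hFcard : ∀ w : W, #(F w) ≤ 2 ^ κ := by
    intro w
    induction w using wf.induction with
    | _ w IH =>
      rw [hFeq w]
      apply hgcard
      calc #(⋃ v : {v : W // v < w}, F v.1)
          ≤ sum (fun v : {v : W // v < w} => #(F v.1)) := mk_iUnion_le_sum_mk
        _ ≤ sum (fun _ : {v : W // v < w} => 2 ^ κ) := sum_le_sum _ _ (fun v => IH v.1 v.2)
        _ = #{v : W // v < w} * 2 ^ κ := sum_const' _ _
        _ ≤ 2 ^ κ * 2 ^ κ := mul_le_mul' ((hIio w).trans hκ2κ) le_rfl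
        _ = 2 ^ κ := hmul
  set Fa : Set X := ⋃ w : W, F w with hFadef
  have hsmall : ∀ S : Set X, S ⊆ Fa → #S ≤ κ → ∃ w : W, S ⊆ F w := by
    intro S hSF hS
    choose idx hidx using fun a : S => mem_iUnion.mp (hSF a.2)
    have hbd : Set.Bounded (· < ·) (Set.range idx) := by
      refine not_isCofinal_iff.mp fun hc => (Ordinal.lt_cof_type hc).not_gt ?_
      rw [Ordinal.cof_toType, hreg.cof_eq]
      exact lt_of_le_of_lt (mk_range_le.trans hS) (Order.lt_succ κ)
    obtain ⟨w, hw⟩ := hbd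
    exact ⟨w, fun a ha =>
      hFmono (hw (idx ⟨a, ha⟩) (mem_range_self _)).le (hidx ⟨a, ha⟩)⟩
  have hFaclosed : closure Fa ⊆ Fa := by
    intro y hy
    have hne : ∀ b ∈ B y, ∃ z, z ∈ b ∧ z ∈ Fa := by
      intro b hb
      obtain ⟨z, hz⟩ := mem_closure_iff.mp hy b ((hB y).1 b hb).2 ((hB y).1 b hb).1
      exact ⟨z, hz.1, hz.2⟩
    choose! s hs1 hs2 using hne
    obtain ⟨w, hw⟩ := hsmall (s '' B y) (by rintro a ⟨b, hb, rfl⟩; exact hs2 b hb)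
      (mk_image_le.trans (hBκ y))
    obtain ⟨w', hww'⟩ := exists_gt w
    have hyc : y ∈ closure (⋃ v : {v : W // v < w'}, F v.1) := by
      rw [mem_closure_iff]
      intro U hU hyU
      obtain ⟨b, hb, hbU⟩ := (hB y).2 U hU hyU
      exact ⟨s b, hbU (hs1 b hb), mem_iUnion.mpr ⟨⟨w, hww'⟩, hw ⟨b, hb, rfl⟩⟩⟩
    have hyg : y ∈ g (⋃ v : {v : W // v < w'}, F v.1) := hgsub _ hyc
    rw [← hFeq w'] at hyg
    exact mem_iUnion.mpr ⟨w', hyg⟩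
  have hFauniv : ∀ p : X, p ∈ Fa := by
    by_contra hcon
    push_neg at hcon
    obtain ⟨p, hp⟩ := hcon
    have hFc : IsClosed Fa := isClosed_of_closure_subset hFaclosed
    have hbx : ∀ x ∈ Fa, ∃ b ∈ B x, p ∉ b := by
      intro x hx
      have hne : x ≠ p := fun h => hp (h ▸ hx)
      obtain ⟨U, V, hU, hV, hxU, hpV, hUV⟩ := t2_separation hne
      obtain ⟨b, hb, hbU⟩ := (hB x).2 U hU hxU
      exact ⟨b, hb, fun hpb => disjoint_left.mp hUV (hbU hpb) hpV⟩
    have hCopen : ∀ U ∈ insert Faᶜ {b | ∃ x ∈ Fa, b ∈ B x ∧ p ∉ b}, IsOpen U := by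
      rintro U (rfl | ⟨x, hx, hbx', _⟩)
      · exact hFc.isOpen_compl
      · exact ((hB x).1 _ hbx').2
    have hCcov : ⋃₀ insert Faᶜ {b | ∃ x ∈ Fa, b ∈ B x ∧ p ∉ b} = Set.univ := by
      apply eq_univ_of_forall
      intro x
      by_cases hx : x ∈ Fa
      · obtain ⟨b, hb, hpb⟩ := hbx x hx
        exact ⟨b, Or.inr ⟨x, hx, hb, hpb⟩, ((hB x).1 b hb).1⟩
      · exact ⟨Faᶜ, Or.inl rfl, hx⟩
    obtain ⟨D, hDC, hDκ, hDcov⟩ :=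
      hlin (insert Faᶜ {b | ∃ x ∈ Fa, b ∈ B x ∧ p ∉ b}) hCopen hCcov
    set 𝒰 : Set (Set X) := D \ {Faᶜ} with h𝒰def
    have h𝒰κ : #𝒰 ≤ κ := (mk_le_mk_of_subset diff_subset).trans hDκ
    have h𝒰sub : ∀ u ∈ 𝒰, ∃ x, x ∈ Fa ∧ u ∈ B x ∧ p ∉ u := by
      rintro u ⟨huD, hune⟩
      rcases hDC huD with rfl | h
      · exact absurd rfl hune
      · obtain ⟨x, hx, h1, h2⟩ := h
        exact ⟨x, hx, h1, h2⟩
    have h𝒰cov : Fa ⊆ ⋃₀ 𝒰 := by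
      intro x hx
      have hxD : x ∈ ⋃₀ D := hDcov ▸ mem_univ x
      obtain ⟨u, huD, hxu⟩ := hxD
      refine ⟨u, ⟨huD, ?_⟩, hxu⟩
      intro h
      rw [mem_singleton_iff] at h
      subst h
      exact hxu hx
    have hp𝒰 : p ∉ ⋃₀ 𝒰 := by
      rintro ⟨u, hu, hpu⟩
      obtain ⟨x, _, _, hpu'⟩ := h𝒰sub u hu
      exact hpu' hpu
    have hneuniv : ⋃₀ 𝒰 ≠ Set.univ := fun h => hp𝒰 (h ▸ mem_univ p)
    choose! xf hxf1 hxf2 hxf3 using h𝒰sub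
    obtain ⟨w, hwA⟩ := hsmall (xf '' 𝒰) (by rintro a ⟨u, hu, rfl⟩; exact hxf1 u hu)
      (mk_image_le.trans h𝒰κ)
    obtain ⟨w', hww'⟩ := exists_gt w
    have h𝒰UB : 𝒰 ⊆ UB (⋃ v : {v : W // v < w'}, F v.1) := by
      intro u hu
      have hxm : xf u ∈ ⋃ v : {v : W // v < w'}, F v.1 :=
        mem_iUnion.mpr ⟨⟨w, hww'⟩, hwA ⟨u, hu, rfl⟩⟩
      exact mem_biUnion hxm (hxf2 u hu)
    have hpickmem : pick 𝒰 ∈ F w' := by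
      rw [hFeq w']
      exact hgpick _ 𝒰 h𝒰UB h𝒰κ hneuniv
    have hmem : pick 𝒰 ∈ ⋃₀ 𝒰 := h𝒰cov (mem_iUnion.mpr ⟨w', hpickmem⟩)
    exact hpick 𝒰 hneuniv hmem
  have hFaeq : Fa = Set.univ := eq_univ_of_forall hFauniv
  have hXF : #X = #Fa := by rw [hFaeq, mk_univ]
  rw [hXF]
  calc #Fa ≤ sum (fun w : W => #(F w)) := mk_iUnion_le_sum_mk
    _ ≤ sum (fun _ : W => 2 ^ κ) := sum_le_sum _ _ hFcard
    _ = #W * 2 ^ κ := sum_const' _ _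
    _ ≤ 2 ^ κ * 2 ^ κ := by
        refine mul_le_mul' ?_ le_rfl
        rw [hWdef, Cardinal.mk_toType, Cardinal.card_ord]
        exact Order.succ_le_of_lt (cantor κ)
    _ = 2 ^ κ := hmul

end ArhAux

/-- Arhangel'skii's inequality: `|X| ≤ 2^(χ(X)·L(X))` for every Hausdorff space. -/
theorem arhangelskii_inequality {X : Type u} [TopologicalSpace X] [T2Space X] :
    #X ≤ 2 ^ (character X * lindelofDegree X) := by
  have hcs : character X ∈ {κ | Cardinal.aleph0 ≤ κ ∧
      ∀ x : X, ∃ B : Set (Set X), IsNbhdBasisAt x B ∧ #B ≤ κ} := by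
    apply csInf_mem
    refine ⟨max (2 ^ #X) ℵ₀, le_max_right _ _, fun x => ?_⟩
    refine ⟨{U | IsOpen U ∧ x ∈ U}, ⟨fun b hb => ⟨hb.2, hb.1⟩,
      fun U hU hxU => ⟨U, ⟨hU, hxU⟩, subset_rfl⟩⟩, ?_⟩
    refine (mk_set_le _).trans ?_
    rw [mk_set]
    exact le_max_left _ _
  have hls : lindelofDegree X ∈ {κ | Cardinal.aleph0 ≤ κ ∧
      ∀ C : Set (Set X), (∀ U ∈ C, IsOpen U) → ⋃₀ C = Set.univ →
      ∃ D ⊆ C, #D ≤ κ ∧ ⋃₀ D = Set.univ} := by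
    apply csInf_mem
    refine ⟨max (2 ^ #X) ℵ₀, le_max_right _ _, fun C hCo hCc => ⟨C, subset_rfl, ?_, hCc⟩⟩
    refine (mk_set_le _).trans ?_
    rw [mk_set]
    exact le_max_left _ _
  obtain ⟨hχ0, hχ⟩ := hcs
  obtain ⟨hL0, hLp⟩ := hls
  have hmax : character X * lindelofDegree X = max (character X) (lindelofDegree X) :=
    mul_eq_max hχ0 hL0
  have hχκ : character X ≤ character X * lindelofDegree X := hmax ▸ le_max_left _ _
  have hLκ : lindelofDegree X ≤ character X * lindelofDegree X := hmax ▸ le_max_right _ _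
  exact arh_aux (hχ0.trans hχκ)
    (fun x => (hχ x).imp (fun B hB => ⟨hB.1, hB.2.trans hχκ⟩))
    (fun C hCo hCc => (hLp C hCo hCc).imp (fun D hD => ⟨hD.1, hD.2.1.trans hLκ, hD.2.2⟩))
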